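/- For all integers n >= l >= 0, (1/(n+1))*binom(2n+2, n-l)*C_{n+1} = \sum_{k=0}^{n-l} (2k+2)(2k+l+3)(2k+2l+4) / ((2n+2)(2n+3)(2n+4)^2) * binom(2n+4, n-k-l) * binom(2n+4, n-k+1). -/

import Mathlib

private def Wp (n l k : ℚ) : ℚ :=
  2*k^4 + (4*n+4*l+18)*k^3 + (2*n^2+6*n*l+2*l^2+23*n+25*l+55)*k^2
  + (2*n^2*l+6*n^2+2*n*l^2+21*n*l+41*n+7*l^2+46*l+69)*k
  + (n^3+2*n^2*l+n*l^2+10*n^2+13*n*l+3*l^2+33*n+21*l+36)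

private def Gfun (n l k : ℕ) : ℚ :=
  2 * Wp n l k * ((2*n+4).choose (n-k-l)) * ((2*n+4).choose (n-k+1)) /
    ((2*(n:ℚ)+2)*(2*n+3)^2*(2*n+4)^2)

private lemma chooseQ (M r : ℕ) (h : r ≤ M) :
    (M.choose (r+1) : ℚ) * (r+1) = M.choose r * ((M:ℚ) - r) := by
  have h1 := Nat.choose_succ_right_eq M r
  have h2 := congrArg (fun x : ℕ => (x:ℚ)) h1
  push_cast [h] at h2
  exact h2

private lemma liftQ (M r : ℕ) (h : r ≤ M) :
    ((M+1).choose r : ℚ) * ((M:ℚ) + 1 - r) = M.choose r * ((M:ℚ)+1) := by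
  have h1 := Nat.choose_mul_succ_eq M r
  have h2 := congrArg (fun x : ℕ => (x:ℚ)) h1
  push_cast [Nat.le_succ_of_le h] at h2
  linarith [h2]

set_option maxHeartbeats 2000000 in
theorem stmt_13 (n l : ℕ) (h : l ≤ n) :
    (1 / (n + 1 : ℚ)) * ((2 * n + 2).choose (n - l)) * catalan (n + 1) =
      ∑ k ∈ Finset.range (n - l + 1),
        ((2 * k + 2 : ℚ) * (2 * k + l + 3) * (2 * k + 2 * l + 4)) /
            ((2 * n + 2 : ℚ) * (2 * n + 3) * (2 * n + 4) ^ 2) *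
          ((2 * n + 4).choose (n - k - l)) * ((2 * n + 4).choose (n - k + 1)) := by
  -- telescoping step
  have key : ∀ k : ℕ, k + 1 ≤ n - l →
      ((2 * k + 2 : ℚ) * (2 * k + l + 3) * (2 * k + 2 * l + 4)) /
          ((2 * n + 2 : ℚ) * (2 * n + 3) * (2 * n + 4) ^ 2) *
        ((2 * n + 4).choose (n - k - l)) * ((2 * n + 4).choose (n - k + 1))
        = Gfun n l k - Gfun n l (k+1) := by
    intro k hk
    have hkl : k + 1 + l ≤ n := by omega
    have e1 : n - (k+1) - l = n - k - l - 1 := by omega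
    have e2 : n - (k+1) + 1 = n - k := by omega
    have haq : ((n - k - l : ℕ) : ℚ) = (n:ℚ) - k - l := by
      rw [Nat.sub_sub, Nat.cast_sub (by omega)]; push_cast; ring
    have haq1 : ((n - k - l - 1 : ℕ) : ℚ) = (n:ℚ) - k - l - 1 := by
      rw [Nat.cast_sub (by omega), haq]
      norm_num
    have hbq : ((n - k : ℕ) : ℚ) = (n:ℚ) - k := Nat.cast_sub (by omega)
    -- relation for the first binomial
    have h1 := chooseQ (2*n+4) (n-k-l-1) (by omega)
    rw [show n-k-l-1+1 = n-k-l by omega, haq1] at h1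
    have hCa : ((2*n+4).choose (n-k-l-1) : ℚ)
        = ((2*n+4).choose (n-k-l) : ℚ) * ((n:ℚ) - k - l) / ((n:ℚ) + k + l + 5) := by
      rw [eq_div_iff (by positivity)]
      push_cast at h1 ⊢
      linarith [h1]
    -- relation for the second binomial
    have h2 := chooseQ (2*n+4) (n-k) (by omega)
    rw [show n-k+1 = n-k+1 from rfl, hbq] at h2
    have hCb : ((2*n+4).choose (n-k) : ℚ)
        = ((2*n+4).choose (n-k+1) : ℚ) * ((n:ℚ) - k + 1) / ((n:ℚ) + k + 4) := by
      rw [eq_div_iff (by positivity)]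
      push_cast at h2 ⊢
      linarith [h2]
    rw [Gfun, Gfun, e1, e2, hCa, hCb, Wp, Wp]
    have hn2 : (2*(n:ℚ)+2) ≠ 0 := by positivity
    have hn3 : (2*(n:ℚ)+3) ≠ 0 := by positivity
    have hn4 : (2*(n:ℚ)+4) ≠ 0 := by positivity
    have hd1 : ((n:ℚ) + k + l + 5) ≠ 0 := by positivity
    have hd2 : ((n:ℚ) + k + 4) ≠ 0 := by positivity
    field_simp
    push_cast
    ring
  -- partial sums telescope
  have hsum : ∀ j : ℕ, j ≤ n - l →
      ∑ k ∈ Finset.range j,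
        ((2 * k + 2 : ℚ) * (2 * k + l + 3) * (2 * k + 2 * l + 4)) /
            ((2 * n + 2 : ℚ) * (2 * n + 3) * (2 * n + 4) ^ 2) *
          ((2 * n + 4).choose (n - k - l)) * ((2 * n + 4).choose (n - k + 1))
        = Gfun n l 0 - Gfun n l j := by
    intro j
    induction j with
    | zero => simp
    | succ j ih =>
      intro hj
      rw [Finset.sum_range_succ, ih (by omega), key j (by omega)]
      ring
  -- last term
  have hGm : Gfun n l (n - l)
      = ((2 * ((n:ℚ) - l) + 2 : ℚ) * (2 * ((n:ℚ)-l) + l + 3) * (2 * ((n:ℚ)-l) + 2 * l + 4)) /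
            ((2 * n + 2 : ℚ) * (2 * n + 3) * (2 * n + 4) ^ 2) *
          ((2 * n + 4).choose (n - (n-l) - l)) * ((2 * n + 4).choose (n - (n-l) + 1)) := by
    rw [Gfun, Wp]
    have hmq : ((n - l : ℕ) : ℚ) = (n:ℚ) - l := Nat.cast_sub h
    rw [hmq]
    have hn2 : (2*(n:ℚ)+2) ≠ 0 := by positivity
    have hn3 : (2*(n:ℚ)+3) ≠ 0 := by positivity
    have hn4 : (2*(n:ℚ)+4) ≠ 0 := by positivity
    field_simp
    ring
  -- initial value
  have hG0 : (1 / (n + 1 : ℚ)) * ((2 * n + 2).choose (n - l)) * catalan (n + 1)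
      = Gfun n l 0 := by
    have hcat : ((catalan (n+1) : ℚ)) = ((2*n+2).choose (n+1) : ℚ) / ((n:ℚ) + 2) := by
      have h1 := succ_mul_catalan_eq_centralBinom (n+1)
      have h2 := congrArg (fun x : ℕ => (x:ℚ)) h1
      rw [Nat.centralBinom] at h2
      rw [eq_div_iff (by positivity), show 2*(n+1) = 2*n+2 by ring] at *
      push_cast at h2 ⊢
      linarith [h2]
    have hnlq : ((n - l : ℕ) : ℚ) = (n:ℚ) - l := Nat.cast_sub h
    -- lift binomials from 2n+2 to 2n+4
    have hB1 : ((2*n+3).choose (n-l) : ℚ) * ((n:ℚ) + l + 3) = ((2*n+2).choose (n-l) : ℚ) * (2*(n:ℚ)+3) := by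
      have := liftQ (2*n+2) (n-l) (by omega)
      rw [show 2*n+2+1 = 2*n+3 by ring, hnlq] at this
      push_cast at this ⊢
      linarith [this]
    have hB2 : ((2*n+4).choose (n-l) : ℚ) * ((n:ℚ) + l + 4) = ((2*n+3).choose (n-l) : ℚ) * (2*(n:ℚ)+4) := by
      have := liftQ (2*n+3) (n-l) (by omega)
      rw [show 2*n+3+1 = 2*n+4 by ring, hnlq] at this
      push_cast at this ⊢
      linarith [this]
    have hB3 : ((2*n+3).choose (n+1) : ℚ) * ((n:ℚ) + 2) = ((2*n+2).choose (n+1) : ℚ) * (2*(n:ℚ)+3) := by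
      have := liftQ (2*n+2) (n+1) (by omega)
      rw [show 2*n+2+1 = 2*n+3 by ring] at this
      push_cast at this ⊢
      linarith [this]
    have hB4 : ((2*n+4).choose (n+1) : ℚ) * ((n:ℚ) + 3) = ((2*n+3).choose (n+1) : ℚ) * (2*(n:ℚ)+4) := by
      have := liftQ (2*n+3) (n+1) (by omega)
      rw [show 2*n+3+1 = 2*n+4 by ring] at this
      push_cast at this ⊢
      linarith [this]
    have hC1 : ((2*n+4).choose (n-l) : ℚ)
        = ((2*n+2).choose (n-l) : ℚ) * ((2*(n:ℚ)+3) * (2*(n:ℚ)+4)) / (((n:ℚ)+l+3) * ((n:ℚ)+l+4)) := by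
      rw [eq_div_iff (by positivity)]
      nlinarith [hB1, hB2]
    have hC2 : ((2*n+4).choose (n+1) : ℚ)
        = ((2*n+2).choose (n+1) : ℚ) * ((2*(n:ℚ)+3) * (2*(n:ℚ)+4)) / (((n:ℚ)+2) * ((n:ℚ)+3)) := by
      rw [eq_div_iff (by positivity)]
      nlinarith [hB3, hB4]
    rw [Gfun, Wp]
    rw [show n - 0 - l = n - l by omega, show n - 0 + 1 = n + 1 by omega]
    rw [hcat, hC1, hC2]
    have hn1 : ((n:ℚ)+1) ≠ 0 := by positivity
    have hn2 : (2*(n:ℚ)+2) ≠ 0 := by positivity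
    have hn3 : (2*(n:ℚ)+3) ≠ 0 := by positivity
    have hn4 : (2*(n:ℚ)+4) ≠ 0 := by positivity
    have he1 : ((n:ℚ)+2) ≠ 0 := by positivity
    have he2 : ((n:ℚ)+3) ≠ 0 := by positivity
    have he3 : ((n:ℚ)+l+3) ≠ 0 := by positivity
    have he4 : ((n:ℚ)+l+4) ≠ 0 := by positivity
    push_cast
    field_simp
    ring
  rw [hG0, Finset.sum_range_succ, hsum (n - l) le_rfl]
  have hmq : ((n - l : ℕ) : ℚ) = (n:ℚ) - l := Nat.cast_sub h
  rw [hmq, ← hGm]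
  ring
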